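/- Let k be an algebraically closed field of characteristic zero, and let X = (0,0,1; 0,0,0; −1,0,0) and Y = (0,0,0; 0,0,1; 0,−1,0) in M_3(k) (rows listed in order). For every P ∈ 𝒫_3, the matrices X and Y are each k-linear combinations of PᵀXP and PᵀYP; that is, there exist r, s, r′, s′ ∈ k with r·PᵀXP + s·PᵀYP = X and r′·PᵀXP + s′·PᵀYP = Y. -/
import Mathlib


open Matrix

/-- Membership in `𝒫₃`: block form `(P₁ P₂; 0 1)` with `P₁ ∈ GL₂(k)`. -/
def memP3 {k : Type*} [Field k] (P : Matrix (Fin 3) (Fin 3) k) : Prop :=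
  IsUnit !![P 0 0, P 0 1; P 1 0, P 1 1] ∧ P 2 0 = 0 ∧ P 2 1 = 0 ∧ P 2 2 = 1

theorem stmt_18 (k : Type*) [Field k] [IsAlgClosed k] [CharZero k]
    (P : Matrix (Fin 3) (Fin 3) k) (hP : memP3 P) :
    (∃ r s : k, r • (Pᵀ * !![(0 : k), 0, 1; 0, 0, 0; -1, 0, 0] * P)
        + s • (Pᵀ * !![(0 : k), 0, 0; 0, 0, 1; 0, -1, 0] * P)
        = !![(0 : k), 0, 1; 0, 0, 0; -1, 0, 0]) ∧
    (∃ r' s' : k, r' • (Pᵀ * !![(0 : k), 0, 1; 0, 0, 0; -1, 0, 0] * P)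
        + s' • (Pᵀ * !![(0 : k), 0, 0; 0, 0, 1; 0, -1, 0] * P)
        = !![(0 : k), 0, 0; 0, 0, 1; 0, -1, 0]) := by
  obtain ⟨hU, h20, h21, h22⟩ := hP
  have hdet : P 0 0 * P 1 1 - P 0 1 * P 1 0 ≠ 0 := by
    have := (Matrix.isUnit_iff_isUnit_det _).1 hU
    rw [Matrix.det_fin_two_of] at this
    exact this.ne_zero ∘ (by intro h; exact h)
  set Δ := P 0 0 * P 1 1 - P 0 1 * P 1 0 with hΔ
  constructor
  · refine ⟨P 1 1 / Δ, -(P 0 1) / Δ, ?_⟩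
    ext i j
    fin_cases i <;> fin_cases j <;>
      (simp [Matrix.mul_apply, Fin.sum_univ_three, Matrix.vecHead, Matrix.vecTail,
        h20, h21, h22]; try field_simp; try ring)
  · refine ⟨-(P 1 0) / Δ, P 0 0 / Δ, ?_⟩
    ext i j
    fin_cases i <;> fin_cases j <;>
      (simp [Matrix.mul_apply, Fin.sum_univ_three, Matrix.vecHead, Matrix.vecTail,
        h20, h21, h22]; try field_simp; try ring)
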